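/- Adversarial estimation error bound for one-hidden-layer ReLU networks with the supremum-based ρ-margin loss: Let ε≥0 and let D be a distribution over X×Y such that M_{Φ̃_ρ,H_NN} ≤ ε. Then for every h∈H_NN, R_{ℓ_γ}(h) − R*_{ℓ_γ,H_NN} ≤ ρ·(R_{Φ̃_ρ}(h) − R*_{Φ̃_ρ,H_NN} + ε)/min{Λ·B, ρ}. -/
import Mathlib


open MeasureTheory Set
open scoped ENNReal

noncomputable section

/-- Conditional `ℓ`-risk of `h` at `x` with conditional probability level `t`. -/
def condRiskT {X : Type*} (ℓ : (X → ℝ) → X → ℝ → ℝ) (h : X → ℝ) (x : X) (t : ℝ) : ℝ :=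
  t * ℓ h x 1 + (1 - t) * ℓ h x (-1)

/-- Conditional `ℓ`-risk of `h` at `x`. -/
def condRisk {X : Type*} (ℓ : (X → ℝ) → X → ℝ → ℝ) (η : X → ℝ) (h : X → ℝ) (x : X) : ℝ :=
  condRiskT ℓ h x (η x)

/-- Minimal conditional `ℓ`-risk over the hypothesis set `H` at `x`. -/
def condRiskStar {X : Type*} (ℓ : (X → ℝ) → X → ℝ → ℝ) (η : X → ℝ) (H : Set (X → ℝ))
    (x : X) : ℝ :=
  sInf ((fun h => condRisk ℓ η h x) '' H)

/-- `ΔC_{ℓ,H}(h,x)`. -/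
def deltaC {X : Type*} (ℓ : (X → ℝ) → X → ℝ → ℝ) (η : X → ℝ) (H : Set (X → ℝ))
    (h : X → ℝ) (x : X) : ℝ :=
  condRisk ℓ η h x - condRiskStar ℓ η H x

/-- `ΔC_{ℓ,H}(h,x,t)`. -/
def deltaCT {X : Type*} (ℓ : (X → ℝ) → X → ℝ → ℝ) (H : Set (X → ℝ))
    (h : X → ℝ) (x : X) (t : ℝ) : ℝ :=
  condRiskT ℓ h x t - sInf ((fun h' => condRiskT ℓ h' x t) '' H)

/-- Generalization error `R_ℓ(h)` with respect to the input-space set `XS`. -/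
def genErrS {X : Type*} [MeasurableSpace X] (μ : Measure X) (XS : Set X)
    (ℓ : (X → ℝ) → X → ℝ → ℝ) (η : X → ℝ) (h : X → ℝ) : ℝ :=
  ∫ x in XS, condRisk ℓ η h x ∂μ

/-- Best-in-class error `R*_{ℓ,H}`. -/
def bestErrS {X : Type*} [MeasurableSpace X] (μ : Measure X) (XS : Set X)
    (ℓ : (X → ℝ) → X → ℝ → ℝ) (η : X → ℝ) (H : Set (X → ℝ)) : ℝ :=
  sInf ((fun h => genErrS μ XS ℓ η h) '' H)

/-- Minimizability gap `M_{ℓ,H}`. -/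
def minGapS {X : Type*} [MeasurableSpace X] (μ : Measure X) (XS : Set X)
    (ℓ : (X → ℝ) → X → ℝ → ℝ) (η : X → ℝ) (H : Set (X → ℝ)) : ℝ :=
  bestErrS μ XS ℓ η H - ∫ x in XS, condRiskStar ℓ η H x ∂μ

/-- `ε`-truncation `⟨t⟩_ε = t · 1_{t > ε}`. -/
def trunc (ε t : ℝ) : ℝ := if ε < t then t else 0

/-- `u_h(x) = inf_{‖x−x'‖ ≤ γ} h(x')`. -/
def uInf {E : Type*} [NormedAddCommGroup E] (γ : ℝ) (h : E → ℝ) (x : E) : ℝ :=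
  sInf (h '' {x' | ‖x - x'‖ ≤ γ})

/-- `o_h(x) = sup_{‖x−x'‖ ≤ γ} h(x')`. -/
def oSup {E : Type*} [NormedAddCommGroup E] (γ : ℝ) (h : E → ℝ) (x : E) : ℝ :=
  sSup (h '' {x' | ‖x - x'‖ ≤ γ})

/-- The adversarial zero-one loss `ℓ_γ(h,x,y) = sup_{‖x−x'‖ ≤ γ} 1_{y·h(x') ≤ 0}`. -/
def lossGamma {E : Type*} [NormedAddCommGroup E] (γ : ℝ) (h : E → ℝ) (x : E) (y : ℝ) : ℝ :=
  sSup ((fun x' => if y * h x' ≤ 0 then (1:ℝ) else 0) '' {x' | ‖x - x'‖ ≤ γ})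

/-- The supremum-based loss `Φ̃(h,x,y) = sup_{‖x−x'‖ ≤ γ} Φ(y·h(x'))`. -/
def supLoss {E : Type*} [NormedAddCommGroup E] (γ : ℝ) (Φ : ℝ → ℝ)
    (h : E → ℝ) (x : E) (y : ℝ) : ℝ :=
  sSup ((fun x' => Φ (y * h x')) '' {x' | ‖x - x'‖ ≤ γ})

/-- `H̄_γ(x) = {h ∈ H : u_h(x) ≤ 0 ≤ o_h(x)}`. -/
def Hbar {E : Type*} [NormedAddCommGroup E] (γ : ℝ) (H : Set (E → ℝ)) (x : E) :
    Set (E → ℝ) :=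
  {h ∈ H | uInf γ h x ≤ 0 ∧ 0 ≤ oSup γ h x}

/-- A hypothesis set is symmetric when it is closed under negation. -/
def IsSymmetricHyp {E : Type*} (H : Set (E → ℝ)) : Prop :=
  ∀ h : E → ℝ, h ∈ H ↔ (fun x => -(h x)) ∈ H

end

noncomputable section

/-- The one-hidden-layer ReLU network hypothesis set
`H_NN = {x ↦ ∑_j u_j (w_j·x + b)_+ : ‖u‖₁ ≤ Λ, ‖w_j‖_q ≤ W, |b| ≤ B}`. -/
def nnHyp (d n : ℕ) (p q : ℝ≥0∞) [Fact (1 ≤ q)] (Λ W B : ℝ) :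
    Set (PiLp p (fun _ : Fin d => ℝ) → ℝ) :=
  {h | ∃ (u : Fin n → ℝ) (w : Fin n → PiLp q (fun _ : Fin d => ℝ)) (b : ℝ),
    (∑ j, |u j|) ≤ Λ ∧ (∀ j, ‖w j‖ ≤ W) ∧ |b| ≤ B ∧
    h = fun x => ∑ j, u j * max ((∑ i, w j i * x i) + b) 0}

/-- The `ρ`-margin loss `Φ_ρ(t) = min{1, max{0, 1 − t/ρ}}`. -/
def rhoMargin (ρ : ℝ) (t : ℝ) : ℝ := min 1 (max 0 (1 - t / ρ))

end

noncomputable section AuxLemmas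

open Set

variable {E : Type*} [NormedAddCommGroup E]

lemma ball_self_mem (γ : ℝ) (hγ : 0 ≤ γ) (x : E) : x ∈ {x' : E | ‖x - x'‖ ≤ γ} := by
  simp [hγ]

lemma rhoMargin_nonneg (ρ t : ℝ) : 0 ≤ rhoMargin ρ t :=
  le_min zero_le_one (le_max_left 0 _)

lemma rhoMargin_le_one (ρ t : ℝ) : rhoMargin ρ t ≤ 1 := min_le_left _ _

lemma rhoMargin_of_nonpos {ρ t : ℝ} (hρ : 0 < ρ) (ht : t ≤ 0) : rhoMargin ρ t = 1 := by
  have hd : t / ρ ≤ 0 := div_nonpos_of_nonpos_of_nonneg ht hρ.le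
  have h1 : (1:ℝ) ≤ 1 - t / ρ := by linarith
  unfold rhoMargin
  rw [max_eq_right (by linarith : (0:ℝ) ≤ 1 - t / ρ), min_eq_left h1]

lemma rhoMargin_pos_const {ρ c : ℝ} (hρ : 0 < ρ) (hc : 0 < c) :
    rhoMargin ρ c = 1 - min c ρ / ρ := by
  unfold rhoMargin
  rcases le_total c ρ with hcρ | hcρ
  · have h1 : c / ρ ≤ 1 := (div_le_one hρ).mpr hcρ
    have h0 : (0:ℝ) ≤ 1 - c / ρ := by linarith
    rw [min_eq_left hcρ, max_eq_right h0, min_eq_right (by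
      have : 0 ≤ c / ρ := div_nonneg hc.le hρ.le
      linarith)]
  · have h1 : (1:ℝ) ≤ c / ρ := (one_le_div hρ).mpr hcρ
    rw [min_eq_right hcρ, div_self hρ.ne', max_eq_left (by linarith), min_eq_right zero_le_one]
    ring

lemma supLoss_bddAbove (γ ρ : ℝ) (h : E → ℝ) (x : E) (y : ℝ) :
    BddAbove ((fun x' => rhoMargin ρ (y * h x')) '' {x' | ‖x - x'‖ ≤ γ}) :=
  ⟨1, by rintro _ ⟨x', _, rfl⟩; exact rhoMargin_le_one ρ _⟩

lemma le_supLoss {γ : ℝ} (ρ : ℝ) (h : E → ℝ) {x x' : E} (hx' : ‖x - x'‖ ≤ γ) (y : ℝ) :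
    rhoMargin ρ (y * h x') ≤ supLoss γ (rhoMargin ρ) h x y :=
  le_csSup (supLoss_bddAbove γ ρ h x y) ⟨x', hx', rfl⟩

lemma supLoss_le_one {γ : ℝ} (hγ : 0 ≤ γ) (ρ : ℝ) (h : E → ℝ) (x : E) (y : ℝ) :
    supLoss γ (rhoMargin ρ) h x y ≤ 1 :=
  csSup_le ⟨_, ⟨x, ball_self_mem γ hγ x, rfl⟩⟩
    (by rintro _ ⟨x', _, rfl⟩; exact rhoMargin_le_one ρ _)

lemma supLoss_nonneg {γ : ℝ} (hγ : 0 ≤ γ) (ρ : ℝ) (h : E → ℝ) (x : E) (y : ℝ) :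
    0 ≤ supLoss γ (rhoMargin ρ) h x y :=
  le_trans (rhoMargin_nonneg ρ _) (le_supLoss ρ h (ball_self_mem γ hγ x) y)

lemma one_le_supLoss {γ ρ : ℝ} (hρ : 0 < ρ) {h : E → ℝ} {x x' : E} {y : ℝ}
    (hx' : ‖x - x'‖ ≤ γ) (hy : y * h x' ≤ 0) :
    1 ≤ supLoss γ (rhoMargin ρ) h x y := by
  have := le_supLoss (γ := γ) ρ h hx' y
  rwa [rhoMargin_of_nonpos hρ hy] at this

lemma supLoss_const (γ : ℝ) (hγ : 0 ≤ γ) (Φ : ℝ → ℝ) (c : ℝ) (x : E) (y : ℝ) :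
    supLoss γ Φ (fun _ => c) x y = Φ (y * c) := by
  unfold supLoss
  rw [show ((fun x' : E => Φ (y * c)) '' {x' | ‖x - x'‖ ≤ γ}) = {Φ (y * c)} from
    Set.Nonempty.image_const ⟨x, ball_self_mem γ hγ x⟩ _, csSup_singleton]

lemma supLoss_neg (γ : ℝ) (Φ : ℝ → ℝ) (h : E → ℝ) (x : E) (y : ℝ) :
    supLoss γ Φ (fun z => -h z) x y = supLoss γ Φ h x (-y) := by
  unfold supLoss
  congr 1
  apply Set.image_congr
  intro x' _
  congr 1
  ring

lemma lossGamma_eq_one {γ : ℝ} {h : E → ℝ} {x : E} {y : ℝ}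
    (hex : ∃ x', ‖x - x'‖ ≤ γ ∧ y * h x' ≤ 0) : lossGamma γ h x y = 1 := by
  obtain ⟨x', hx', hy⟩ := hex
  unfold lossGamma
  apply le_antisymm
  · exact csSup_le ⟨_, ⟨x', hx', rfl⟩⟩
      (by rintro _ ⟨z, _, rfl⟩; dsimp only; split_ifs <;> norm_num)
  · exact le_csSup ⟨1, by rintro _ ⟨z, _, rfl⟩; dsimp only; split_ifs <;> norm_num⟩
      ⟨x', hx', by simp [hy]⟩

lemma lossGamma_eq_zero {γ : ℝ} (hγ : 0 ≤ γ) {h : E → ℝ} {x : E} {y : ℝ}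
    (hex : ∀ x', ‖x - x'‖ ≤ γ → ¬ y * h x' ≤ 0) : lossGamma γ h x y = 0 := by
  unfold lossGamma
  apply le_antisymm
  · exact csSup_le ⟨_, ⟨x, ball_self_mem γ hγ x, rfl⟩⟩
      (by rintro _ ⟨z, hz, rfl⟩; dsimp only; rw [if_neg (hex z hz)])
  · exact le_csSup ⟨1, by rintro _ ⟨z, _, rfl⟩; dsimp only; split_ifs <;> norm_num⟩
      ⟨x, ball_self_mem γ hγ x, by
        dsimp only; rw [if_neg (hex x (by simpa using (hγ : 0 ≤ γ)))]⟩

lemma lossGamma_nonneg {γ : ℝ} (hγ : 0 ≤ γ) (h : E → ℝ) (x : E) (y : ℝ) :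
    0 ≤ lossGamma γ h x y := by
  by_cases hex : ∃ x', ‖x - x'‖ ≤ γ ∧ y * h x' ≤ 0
  · rw [lossGamma_eq_one hex]; norm_num
  · push_neg at hex
    rw [lossGamma_eq_zero hγ (fun x' hx' => not_le.mpr (hex x' hx'))]

lemma condRisk_supLoss_nonneg {γ ρ : ℝ} (hγ : 0 ≤ γ) (η : E → ℝ) {x : E}
    (ht : η x ∈ Icc (0:ℝ) 1) (g : E → ℝ) :
    0 ≤ condRisk (supLoss γ (rhoMargin ρ)) η g x :=
  add_nonneg (mul_nonneg ht.1 (supLoss_nonneg hγ ρ g x 1))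
    (mul_nonneg (by linarith [ht.2]) (supLoss_nonneg hγ ρ g x (-1)))

lemma condRiskStar_le_supLoss {γ ρ : ℝ} (hγ : 0 ≤ γ) (η : E → ℝ)
    (hη01 : ∀ x, η x ∈ Icc (0:ℝ) 1) (H : Set (E → ℝ)) {g : E → ℝ} (hg : g ∈ H) (x : E) :
    condRiskStar (supLoss γ (rhoMargin ρ)) η H x ≤ condRisk (supLoss γ (rhoMargin ρ)) η g x :=
  csInf_le ⟨0, by rintro _ ⟨g', _, rfl⟩; exact condRisk_supLoss_nonneg hγ η (hη01 x) g'⟩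
    ⟨g, hg, rfl⟩

lemma condRisk_lossGamma_ge_min {γ : ℝ} (hγ : 0 ≤ γ) (η : E → ℝ) {x : E}
    (ht : η x ∈ Icc (0:ℝ) 1) (g : E → ℝ) :
    min (η x) (1 - η x) ≤ condRisk (lossGamma γ) η g x := by
  obtain ⟨ht0, ht1⟩ := ht
  unfold condRisk condRiskT
  by_cases hex : ∃ x', ‖x - x'‖ ≤ γ ∧ g x' ≤ 0
  · obtain ⟨x', h1, h2⟩ := hex
    have ha : lossGamma γ g x 1 = 1 := lossGamma_eq_one ⟨x', h1, by linarith [h2]⟩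
    have hb : 0 ≤ lossGamma γ g x (-1) := lossGamma_nonneg hγ g x (-1)
    rw [ha]
    have h3 := min_le_left (η x) (1 - η x)
    nlinarith [mul_nonneg (by linarith : (0:ℝ) ≤ 1 - η x) hb]
  · push_neg at hex
    have hx : (0:ℝ) < g x := hex x (by simpa using hγ)
    have hb : lossGamma γ g x (-1) = 1 :=
      lossGamma_eq_one ⟨x, by simpa using hγ, by nlinarith⟩
    have ha : 0 ≤ lossGamma γ g x 1 := lossGamma_nonneg hγ g x 1
    rw [hb]
    have h3 := min_le_right (η x) (1 - η x)
    nlinarith [mul_nonneg ht0 ha]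

end AuxLemmas

noncomputable section NNAux

open Set

lemma nnHyp_neg_mem {d n : ℕ} {p q : ℝ≥0∞} [Fact (1 ≤ q)] {Λ W B : ℝ}
    {g : PiLp p (fun _ : Fin d => ℝ) → ℝ} (hg : g ∈ nnHyp d n p q Λ W B) :
    (fun x => -g x) ∈ nnHyp d n p q Λ W B := by
  obtain ⟨u, w, b, hu, hw, hb, rfl⟩ := hg
  refine ⟨fun j => -u j, w, b, by simpa using hu, hw, hb, ?_⟩
  funext x
  simp [neg_mul, Finset.sum_neg_distrib]

lemma nnHyp_const_mem {d n : ℕ} {p q : ℝ≥0∞} [Fact (1 ≤ q)] {Λ W B : ℝ} (hn : 0 < n)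
    (hΛ : 0 < Λ) (hW : 0 ≤ W) (hB : 0 < B) :
    (fun _ : PiLp p (fun _ : Fin d => ℝ) => Λ * B) ∈ nnHyp d n p q Λ W B := by
  have hn' : ((n:ℝ)) ≠ 0 := Nat.cast_ne_zero.mpr hn.ne'
  refine ⟨fun _ => Λ / n, fun _ => 0, B, ?_, ?_, ?_, ?_⟩
  · have habs : |Λ / (n:ℝ)| = Λ / n :=
      abs_of_pos (div_pos hΛ (by exact_mod_cast hn))
    simp only [habs, Finset.sum_const, Finset.card_univ, Fintype.card_fin, nsmul_eq_mul]
    rw [mul_div_cancel₀ _ hn']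
  · intro j
    simpa using hW
  · rw [abs_of_pos hB]
  · funext x
    have hz : ∀ i, (0 : PiLp q (fun _ : Fin d => ℝ)) i * x i = 0 := fun i => zero_mul _
    simp only [hz, Finset.sum_const_zero, zero_add, max_eq_left hB.le, Finset.sum_const,
      Finset.card_univ, Fintype.card_fin, nsmul_eq_mul]
    field_simp

lemma nnHyp_neg_const_mem {d n : ℕ} {p q : ℝ≥0∞} [Fact (1 ≤ q)] {Λ W B : ℝ} (hn : 0 < n)
    (hΛ : 0 < Λ) (hW : 0 ≤ W) (hB : 0 < B) :
    (fun _ : PiLp p (fun _ : Fin d => ℝ) => -(Λ * B)) ∈ nnHyp d n p q Λ W B := by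
  simpa using nnHyp_neg_mem (nnHyp_const_mem (p := p) hn hΛ hW hB)

end NNAux

noncomputable section KeyLemma

open Set

set_option maxHeartbeats 2000000 in
lemma key_pointwise {d n : ℕ} {p q : ℝ≥0∞} [Fact (1 ≤ p)] [Fact (1 ≤ q)]
    (hn : 0 < n) {Λ W B ρ γ : ℝ} (hΛ : 0 < Λ) (hW : 0 < W) (hB : 0 < B) (hρ : 0 < ρ)
    (hγ : 0 ≤ γ) (η : PiLp p (fun _ : Fin d => ℝ) → ℝ)
    (hη01 : ∀ x, η x ∈ Icc (0:ℝ) 1)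
    {h g : PiLp p (fun _ : Fin d => ℝ) → ℝ}
    (hh : h ∈ nnHyp d n p q Λ W B) (hg : g ∈ nnHyp d n p q Λ W B)
    (x : PiLp p (fun _ : Fin d => ℝ)) :
    condRisk (lossGamma γ) η h x - condRisk (lossGamma γ) η g x
      ≤ ρ / min (Λ * B) ρ *
        (condRisk (supLoss γ (rhoMargin ρ)) η h x
          - condRiskStar (supLoss γ (rhoMargin ρ)) η (nnHyp d n p q Λ W B) x) := by
  set H := nnHyp d n p q Λ W B with hHdef
  set m := min (Λ * B) ρ with hmdef
  have hm : 0 < m := lt_min (mul_pos hΛ hB) hρ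
  set ν := m / ρ with hνdef
  have hν0 : 0 < ν := div_pos hm hρ
  have hν1 : ν ≤ 1 := by
    rw [hνdef, div_le_one hρ]; exact min_le_right _ _
  have hνρ : ν * ρ = m := div_mul_cancel₀ _ hρ.ne'
  set t := η x with htdef
  obtain ⟨ht0, ht1⟩ := hη01 x
  set a := lossGamma γ h x 1 with hadef
  set b := lossGamma γ h x (-1) with hbdef
  set A := supLoss γ (rhoMargin ρ) h x 1 with hAdef
  set Bv := supLoss γ (rhoMargin ρ) h x (-1) with hBvdef
  set Cs := condRiskStar (supLoss γ (rhoMargin ρ)) η H x with hCsdef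
  have hA1 : A ≤ 1 := supLoss_le_one hγ ρ h x 1
  have hBv1 : Bv ≤ 1 := supLoss_le_one hγ ρ h x (-1)
  have hA0 : 0 ≤ A := supLoss_nonneg hγ ρ h x 1
  have hBv0 : 0 ≤ Bv := supLoss_nonneg hγ ρ h x (-1)
  -- candidate bounds on Cs
  have hΦc : rhoMargin ρ (Λ * B) = 1 - ν := by
    rw [rhoMargin_pos_const hρ (mul_pos hΛ hB), hνdef, hmdef]
  have hΦc' : rhoMargin ρ (-(Λ * B)) = 1 := rhoMargin_of_nonpos hρ (show -(Λ * B) ≤ 0 by nlinarith)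
  have hCp : Cs ≤ t * (1 - ν) + (1 - t) * 1 := by
    have h1 := condRiskStar_le_supLoss (ρ := ρ) hγ η hη01 H
      (nnHyp_const_mem (p := p) hn hΛ hW.le hB) x
    unfold condRisk condRiskT at h1
    rw [supLoss_const γ hγ _ _ x 1, supLoss_const γ hγ _ _ x (-1), one_mul, neg_one_mul,
      hΦc, hΦc'] at h1
    exact h1
  have hCm : Cs ≤ t * 1 + (1 - t) * (1 - ν) := by
    have h1 := condRiskStar_le_supLoss (ρ := ρ) hγ η hη01 H
      (nnHyp_neg_const_mem (p := p) hn hΛ hW.le hB) x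
    unfold condRisk condRiskT at h1
    rw [supLoss_const γ hγ _ _ x 1, supLoss_const γ hγ _ _ x (-1), one_mul, neg_one_mul,
      neg_neg, hΦc, rhoMargin_of_nonpos hρ (show -(Λ * B) ≤ 0 by nlinarith)] at h1
    exact h1
  have hCh : Cs ≤ t * A + (1 - t) * Bv := by
    have h1 := condRiskStar_le_supLoss (ρ := ρ) hγ η hη01 H hh x
    unfold condRisk condRiskT at h1
    exact h1
  have hCneg : Cs ≤ t * Bv + (1 - t) * A := by
    have h1 := condRiskStar_le_supLoss (ρ := ρ) hγ η hη01 H (nnHyp_neg_mem hh) x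
    unfold condRisk condRiskT at h1
    rw [supLoss_neg γ _ h x 1, supLoss_neg γ _ h x (-1), neg_neg] at h1
    exact h1
  have hCl : condRisk (lossGamma γ) η h x = t * a + (1 - t) * b := rfl
  have hCΦ : condRisk (supLoss γ (rhoMargin ρ)) η h x = t * A + (1 - t) * Bv := rfl
  clear_value t a b A Bv Cs m ν
  -- the key inequality
  have hkey : ν * (t * a + (1 - t) * b - min t (1 - t)) ≤ t * A + (1 - t) * Bv - Cs := by
    by_cases hexA : ∃ x', ‖x - x'‖ ≤ γ ∧ (1:ℝ) * h x' ≤ 0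
    · have ha1 : a = 1 := hadef.trans (lossGamma_eq_one hexA)
      obtain ⟨xa, hxa, hya⟩ := hexA
      have hAge : 1 ≤ A := by rw [hAdef]; exact one_le_supLoss hρ hxa hya
      by_cases hexB : ∃ x', ‖x - x'‖ ≤ γ ∧ (-1:ℝ) * h x' ≤ 0
      · -- a = 1, b = 1
        have hb1 : b = 1 := hbdef.trans (lossGamma_eq_one hexB)
        obtain ⟨xb, hxb, hyb⟩ := hexB
        have hBge : 1 ≤ Bv := by rw [hBvdef]; exact one_le_supLoss hρ hxb hyb
        rw [ha1, hb1]
        rcases le_total t (1 - t) with hmin | hmin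
        · rw [min_eq_left hmin]
          nlinarith [mul_le_mul_of_nonneg_left hBge (by linarith : (0:ℝ) ≤ 1 - t),
            mul_le_mul_of_nonneg_left hAge ht0]
        · rw [min_eq_right hmin]
          nlinarith [mul_le_mul_of_nonneg_left hBge (by linarith : (0:ℝ) ≤ 1 - t),
            mul_le_mul_of_nonneg_left hAge ht0]
      · -- a = 1, b = 0
        push_neg at hexB
        have hb0 : b = 0 := hbdef.trans (lossGamma_eq_zero hγ (fun x' hx' => not_le.mpr (hexB x' hx')))
        rw [ha1, hb0]
        rcases le_total t (1 - t) with hmin | hmin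
        · rw [min_eq_left hmin]
          nlinarith
        · rw [min_eq_right hmin]
          by_cases hB' : Bv ≤ 1 - ν
          · nlinarith [mul_le_mul_of_nonneg_left (show ν ≤ A - Bv by linarith)
              (show (0:ℝ) ≤ 2 * t - 1 by linarith)]
          · push_neg at hB'
            nlinarith [mul_le_mul_of_nonneg_left hAge ht0,
              mul_le_mul_of_nonneg_left hB'.le (by linarith : (0:ℝ) ≤ 1 - t)]
    · -- a = 0
      push_neg at hexA
      have ha0 : a = 0 := hadef.trans (lossGamma_eq_zero hγ (fun x' hx' => not_le.mpr (hexA x' hx')))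
      have hxx : (0:ℝ) < 1 * h x := hexA x (by simpa using hγ)
      have hexB : ∃ x', ‖x - x'‖ ≤ γ ∧ (-1:ℝ) * h x' ≤ 0 :=
        ⟨x, by simpa using hγ, by nlinarith⟩
      have hb1 : b = 1 := hbdef.trans (lossGamma_eq_one hexB)
      obtain ⟨xb, hxb, hyb⟩ := hexB
      have hBge : 1 ≤ Bv := by rw [hBvdef]; exact one_le_supLoss hρ hxb hyb
      rw [ha0, hb1]
      rcases le_total t (1 - t) with hmin | hmin
      · rw [min_eq_left hmin]
        by_cases hA' : A ≤ 1 - ν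
        · nlinarith [mul_le_mul_of_nonneg_left (show ν ≤ Bv - A by linarith)
            (show (0:ℝ) ≤ 1 - 2 * t by linarith)]
        · push_neg at hA'
          nlinarith [mul_le_mul_of_nonneg_left hBge (by linarith : (0:ℝ) ≤ 1 - t),
            mul_le_mul_of_nonneg_left hA'.le ht0]
      · rw [min_eq_right hmin]
        nlinarith
  -- conclude
  have hgmin : min (η x) (1 - η x) ≤ condRisk (lossGamma γ) η g x :=
    condRisk_lossGamma_ge_min hγ η (hη01 x) g
  rw [← htdef] at hgmin
  rw [hCl, hCΦ, div_mul_eq_mul_div, le_div_iff₀ hm]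
  have step1 : (t * a + (1 - t) * b - condRisk (lossGamma γ) η g x) * m
      ≤ (t * a + (1 - t) * b - min t (1 - t)) * m := by
    apply mul_le_mul_of_nonneg_right _ hm.le
    linarith
  have step2 : (t * a + (1 - t) * b - min t (1 - t)) * m
      ≤ ρ * (t * A + (1 - t) * Bv - Cs) := by
    rw [← hνρ]
    nlinarith [mul_le_mul_of_nonneg_left hkey hρ.le]
  linarith

end KeyLemma

open MeasureTheory Set in
/-- **Adversarial estimation error bound for one-hidden-layer ReLU networks with the
supremum-based ρ-margin loss** (Corollary 4). -/
theorem adversarial_bound_nn_sup_rho_margin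
    {d n : ℕ} {p q : ℝ≥0∞} [Fact (1 ≤ p)] [Fact (1 ≤ q)] (hpq : 1/p + 1/q = 1)
    [MeasurableSpace (PiLp p (fun _ : Fin d => ℝ))]
    [BorelSpace (PiLp p (fun _ : Fin d => ℝ))]
    (γ : ℝ) (hγ : γ ∈ Ioo (0:ℝ) 1)
    (Λ W B ρ : ℝ) (hΛ : 0 < Λ) (hW : 0 < W) (hB : 0 < B) (hρ : 0 < ρ)
    (μ : Measure (PiLp p (fun _ : Fin d => ℝ))) [IsProbabilityMeasure μ]
    (hμXS : μ {x : PiLp p (fun _ : Fin d => ℝ) | ‖x‖ ≤ 1} = 1)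
    (η : PiLp p (fun _ : Fin d => ℝ) → ℝ) (hηmeas : Measurable η)
    (hη01 : ∀ x, η x ∈ Icc (0:ℝ) 1)
    (hIntγ : ∀ g ∈ nnHyp d n p q Λ W B,
      IntegrableOn (condRisk (lossGamma γ) η g) {x | ‖x‖ ≤ 1} μ)
    (hIntΦ : ∀ g ∈ nnHyp d n p q Λ W B,
      IntegrableOn (condRisk (supLoss γ (rhoMargin ρ)) η g) {x | ‖x‖ ≤ 1} μ)
    (hIntSΦ : IntegrableOn
      (condRiskStar (supLoss γ (rhoMargin ρ)) η (nnHyp d n p q Λ W B)) {x | ‖x‖ ≤ 1} μ)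
    (ε : ℝ) (hε : 0 ≤ ε)
    (hgap : minGapS μ {x | ‖x‖ ≤ 1} (supLoss γ (rhoMargin ρ)) η (nnHyp d n p q Λ W B) ≤ ε)
    (h : PiLp p (fun _ : Fin d => ℝ) → ℝ) (hh : h ∈ nnHyp d n p q Λ W B) :
    genErrS μ {x | ‖x‖ ≤ 1} (lossGamma γ) η h
        - bestErrS μ {x | ‖x‖ ≤ 1} (lossGamma γ) η (nnHyp d n p q Λ W B)
      ≤ ρ * (genErrS μ {x | ‖x‖ ≤ 1} (supLoss γ (rhoMargin ρ)) η h
          - bestErrS μ {x | ‖x‖ ≤ 1} (supLoss γ (rhoMargin ρ)) η (nnHyp d n p q Λ W B)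
          + ε) / min (Λ * B) ρ := by
  classical
  have hγ0 : 0 ≤ γ := hγ.1.le
  have hm : 0 < min (Λ * B) ρ := lt_min (mul_pos hΛ hB) hρ
  rcases Nat.eq_zero_or_pos n with hn | hn
  · -- degenerate case: n = 0, the hypothesis set is a singleton
    subst hn
    have hall : ∀ g ∈ nnHyp d 0 p q Λ W B, g = h := by
      rintro g ⟨u, w, b, -, -, -, rfl⟩
      obtain ⟨u', w', b', -, -, -, rfl⟩ := hh
      funext x
      simp
    have himg : ∀ ℓ : (PiLp p (fun _ : Fin d => ℝ) → ℝ) →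
        PiLp p (fun _ : Fin d => ℝ) → ℝ → ℝ,
        (fun g => genErrS μ {x | ‖x‖ ≤ 1} ℓ η g) '' nnHyp d 0 p q Λ W B
          = {genErrS μ {x | ‖x‖ ≤ 1} ℓ η h} := by
      intro ℓ
      apply Subset.antisymm
      · rintro v ⟨g, hgH, rfl⟩
        rw [hall g hgH]
        rfl
      · rintro v hv
        rw [mem_singleton_iff] at hv
        exact ⟨h, hh, hv.symm⟩
    unfold bestErrS
    rw [himg, himg, csInf_singleton, csInf_singleton]
    simp only [sub_self, zero_add]
    exact div_nonneg (mul_nonneg hρ.le hε) hm.le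
  · -- main case: n ≥ 1
    have hmeasXS : MeasurableSet {x : PiLp p (fun _ : Fin d => ℝ) | ‖x‖ ≤ 1} :=
      (isClosed_le continuous_norm continuous_const).measurableSet
    have key : ∀ g ∈ nnHyp d n p q Λ W B,
        genErrS μ {x | ‖x‖ ≤ 1} (lossGamma γ) η h
            - genErrS μ {x | ‖x‖ ≤ 1} (lossGamma γ) η g
          ≤ ρ / min (Λ * B) ρ * (genErrS μ {x | ‖x‖ ≤ 1} (supLoss γ (rhoMargin ρ)) η h
              - ∫ x in {x | ‖x‖ ≤ 1},
                  condRiskStar (supLoss γ (rhoMargin ρ)) η (nnHyp d n p q Λ W B) x ∂μ) := by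
      intro g hgH
      have hpt : ∀ x ∈ {x : PiLp p (fun _ : Fin d => ℝ) | ‖x‖ ≤ 1},
          condRisk (lossGamma γ) η h x - condRisk (lossGamma γ) η g x
            ≤ ρ / min (Λ * B) ρ * (condRisk (supLoss γ (rhoMargin ρ)) η h x
                - condRiskStar (supLoss γ (rhoMargin ρ)) η (nnHyp d n p q Λ W B) x) :=
        fun x _ => key_pointwise hn hΛ hW hB hρ hγ0 η hη01 hh hgH x
      have hi1 : IntegrableOn (fun x => condRisk (lossGamma γ) η h x
          - condRisk (lossGamma γ) η g x) {x | ‖x‖ ≤ 1} μ :=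
        (hIntγ h hh).sub (hIntγ g hgH)
      have hi2 : IntegrableOn (fun x => ρ / min (Λ * B) ρ *
          (condRisk (supLoss γ (rhoMargin ρ)) η h x
            - condRiskStar (supLoss γ (rhoMargin ρ)) η (nnHyp d n p q Λ W B) x))
          {x | ‖x‖ ≤ 1} μ :=
        ((hIntΦ h hh).sub hIntSΦ).const_mul _
      have hint := setIntegral_mono_on hi1 hi2 hmeasXS hpt
      rw [integral_sub (hIntγ h hh) (hIntγ g hgH), integral_const_mul,
        integral_sub (hIntΦ h hh) hIntSΦ] at hint
      exact hint
    have hbest : genErrS μ {x | ‖x‖ ≤ 1} (lossGamma γ) η h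
        - bestErrS μ {x | ‖x‖ ≤ 1} (lossGamma γ) η (nnHyp d n p q Λ W B)
        ≤ ρ / min (Λ * B) ρ * (genErrS μ {x | ‖x‖ ≤ 1} (supLoss γ (rhoMargin ρ)) η h
            - ∫ x in {x | ‖x‖ ≤ 1},
                condRiskStar (supLoss γ (rhoMargin ρ)) η (nnHyp d n p q Λ W B) x ∂μ) := by
      rw [sub_le_comm]
      unfold bestErrS
      refine le_csInf ⟨_, ⟨h, hh, rfl⟩⟩ ?_
      rintro v ⟨g, hgH, rfl⟩
      linarith [key g hgH]
    have hgap' : bestErrS μ {x | ‖x‖ ≤ 1} (supLoss γ (rhoMargin ρ)) η (nnHyp d n p q Λ W B)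
        - ε ≤ ∫ x in {x | ‖x‖ ≤ 1},
            condRiskStar (supLoss γ (rhoMargin ρ)) η (nnHyp d n p q Λ W B) x ∂μ := by
      unfold minGapS at hgap
      linarith
    calc genErrS μ {x | ‖x‖ ≤ 1} (lossGamma γ) η h
          - bestErrS μ {x | ‖x‖ ≤ 1} (lossGamma γ) η (nnHyp d n p q Λ W B)
        ≤ ρ / min (Λ * B) ρ * (genErrS μ {x | ‖x‖ ≤ 1} (supLoss γ (rhoMargin ρ)) η h
            - ∫ x in {x | ‖x‖ ≤ 1},
                condRiskStar (supLoss γ (rhoMargin ρ)) η (nnHyp d n p q Λ W B) x ∂μ) := hbest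
      _ ≤ ρ / min (Λ * B) ρ * (genErrS μ {x | ‖x‖ ≤ 1} (supLoss γ (rhoMargin ρ)) η h
            - bestErrS μ {x | ‖x‖ ≤ 1} (supLoss γ (rhoMargin ρ)) η (nnHyp d n p q Λ W B)
            + ε) := by
          apply mul_le_mul_of_nonneg_left _ (div_nonneg hρ.le hm.le)
          linarith
      _ = ρ * (genErrS μ {x | ‖x‖ ≤ 1} (supLoss γ (rhoMargin ρ)) η h
            - bestErrS μ {x | ‖x‖ ≤ 1} (supLoss γ (rhoMargin ρ)) η (nnHyp d n p q Λ W B)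
            + ε) / min (Λ * B) ρ := by
          ring
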